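/- Let (γ_k)_{k≥0} be a nonnegative sequence with tail sums ∑_{k=l}^∞ γ_k = O(l^{−ν}) for some ν > 0 and ∑_{k=0}^∞ γ_k < ∞. Then for any sequence a_n → 0⁺, ∑_{k=0}^∞ (γ_k ∧ a_n) = O(a_n^{ν/(1+ν)}). -/

import Mathlib

open Filter

set_option linter.unnecessarySimpa false in
/-- Truncation lemma (from the proof of Lemma A.4): if `(γ_k)` is nonnegative,
summable, with tail sums `∑_{k=l}^∞ γ_k ≤ C l^{−ν}` for all `l ≥ 1`, then for any
sequence `a_n → 0` with `a_n > 0`, `∑_{k=0}^∞ (γ_k ∧ a_n) = O(a_n^{ν/(1+ν)})`. -/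
theorem stmt_11 (γ : ℕ → ℝ) (ν : ℝ) (hν : 0 < ν)
    (hpos : ∀ k, 0 ≤ γ k) (hsum : Summable γ)
    (htail : ∃ C : ℝ, ∀ l : ℕ, 1 ≤ l → (∑' k : ℕ, γ (l + k)) ≤ C * (l : ℝ) ^ (-ν))
    (a : ℕ → ℝ) (ha0 : ∀ n, 0 < a n) (halim : Tendsto a atTop (nhds 0)) :
    ∃ C' > 0, ∀ᶠ n in atTop,
      (∑' k : ℕ, min (γ k) (a n)) ≤ C' * a n ^ (ν / (1 + ν)) := by
  obtain ⟨C, hC⟩ := htail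
  set C0 : ℝ := max C 0 with hC0def
  have hC0nn : 0 ≤ C0 := le_max_right _ _
  have h1ν : (0:ℝ) < 1 + ν := by linarith
  refine ⟨2 + C0, by linarith, ?_⟩
  filter_upwards [halim.eventually_lt_const one_pos] with n han1
  set a0 := a n with ha
  have ha0' : 0 < a0 := ha0 n
  have hexp : -(1/(1+ν)) ≤ 0 := by
    have : 0 < 1/(1+ν) := by positivity
    linarith
  set r : ℝ := a0 ^ (-(1/(1+ν))) with hr
  have hrpos : 0 < r := Real.rpow_pos_of_pos ha0' _
  have hr1 : 1 ≤ r :=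
    Real.one_le_rpow_of_pos_of_le_one_of_nonpos ha0' han1.le hexp
  set l : ℕ := ⌈r⌉₊ with hl
  have hl1 : 1 ≤ l := Nat.one_le_ceil_iff.mpr hrpos
  have hlr : r ≤ (l:ℝ) := Nat.le_ceil r
  have hlr2 : (l:ℝ) ≤ 2 * r := by
    have := (Nat.ceil_lt_add_one hrpos.le).le
    linarith
  have hmins : Summable (fun k => min (γ k) a0) :=
    hsum.of_nonneg_of_le (fun k => le_min (hpos k) ha0'.le) (fun k => min_le_left _ _)
  -- key rpow identities
  have hra : r * a0 = a0 ^ (ν/(1+ν)) := by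
    have h1 : -(1/(1+ν)) + 1 = ν/(1+ν) := by field_simp; ring
    rw [hr]
    nth_rewrite 2 [← Real.rpow_one a0]
    rw [← Real.rpow_add ha0', h1]
  have hrν : r ^ (-ν) = a0 ^ (ν/(1+ν)) := by
    rw [hr, ← Real.rpow_mul ha0'.le]
    congr 1
    field_simp
  -- split the sum
  have hsplit := hmins.sum_add_tsum_nat_add l
  have hhead : (∑ i ∈ Finset.range l, min (γ i) a0) ≤ (l:ℝ) * a0 := by
    calc (∑ i ∈ Finset.range l, min (γ i) a0)
        ≤ ∑ i ∈ Finset.range l, a0 :=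
          Finset.sum_le_sum (fun i _ => min_le_right _ _)
      _ = (l:ℝ) * a0 := by simp [mul_comm]
  have htailsum : Summable (fun k => γ (l + k)) := by
    simpa [Nat.add_comm] using (summable_nat_add_iff l).mpr hsum
  have htailmin : (∑' i : ℕ, min (γ (i + l)) a0) ≤ C0 * r ^ (-ν) := by
    have h1 : (∑' i : ℕ, min (γ (i + l)) a0) ≤ ∑' i : ℕ, γ (l + i) := by
      apply Summable.tsum_le_tsum _ _ htailsum
      · intro i
        simpa [Nat.add_comm] using (min_le_left (γ (i + l)) a0)
      · exact hmins.comp_injective (add_left_injective l)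
    have h2 : (∑' i : ℕ, γ (l + i)) ≤ C * (l:ℝ) ^ (-ν) := hC l hl1
    have h3 : C * (l:ℝ) ^ (-ν) ≤ C0 * (l:ℝ) ^ (-ν) :=
      mul_le_mul_of_nonneg_right (le_max_left _ _) (Real.rpow_nonneg (by positivity) _)
    have h4 : ((l:ℝ)) ^ (-ν) ≤ r ^ (-ν) := by
      apply Real.rpow_le_rpow_of_nonpos hrpos hlr (by linarith)
    have h5 : C0 * (l:ℝ) ^ (-ν) ≤ C0 * r ^ (-ν) :=
      mul_le_mul_of_nonneg_left h4 hC0nn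
    linarith
  calc (∑' k : ℕ, min (γ k) a0)
      = (∑ i ∈ Finset.range l, min (γ i) a0) + ∑' i : ℕ, min (γ (i + l)) a0 :=
        hsplit.symm
    _ ≤ (l:ℝ) * a0 + C0 * r ^ (-ν) := add_le_add hhead htailmin
    _ ≤ 2 * r * a0 + C0 * r ^ (-ν) := by
        have := mul_le_mul_of_nonneg_right hlr2 ha0'.le
        linarith
    _ = (2 + C0) * a0 ^ (ν/(1+ν)) := by
        rw [hrν, mul_assoc, hra]; ring
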